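/- Let n > M ≥ 1, let A be a closed subset of ℝ^m, and let f : A → exp_n(ℝ^m) \ exp_{n-1}(ℝ^m) be continuous and fixed-point free with |{ y ∈ f(x) : π₁(y) = max π₁(f(x)) }| = M for all x ∈ A. If every continuous fixed-point free map from a closed subset of ℝ^m into exp_{n-1}(ℝ^m) is colorable by at most K bright colors, then f is colorable by at most K² bright colors. -/

import Mathlib

open Set

/-- The Vietoris topology on the powerset of `Z`, generated by the sets
`{A | A ⊆ U}` and `{A | A ∩ U ≠ ∅}` for `U` open.  Its restriction to the
nonempty closed subsets of `Z` is the usual Vietoris topology on `2^Z`. -/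
def vietoris (Z : Type*) [TopologicalSpace Z] : TopologicalSpace (Set Z) :=
  TopologicalSpace.generateFrom
    ({S | ∃ U : Set Z, IsOpen U ∧ S = {A : Set Z | A ⊆ U}} ∪
     {S | ∃ U : Set Z, IsOpen U ∧ S = {A : Set Z | (A ∩ U).Nonempty}})

/-- Continuity of a set-valued map with respect to the Vietoris topology. -/
def VCont {X Z : Type*} [tX : TopologicalSpace X] [TopologicalSpace Z] (f : X → Set Z) : Prop :=
  @Continuous X (Set Z) tX (vietoris Z) f

/-- `f` is colorable by at most `N` bright colors: there is a cover of `X` by at most `N`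
closed sets `F`, each disjoint from the closure in `Z` of `⋃ x ∈ F, f x`. -/
def BrightColorable {Z : Type*} [TopologicalSpace Z] {X : Set Z}
    (f : X → Set Z) (N : ℕ) : Prop :=
  ∃ 𝓕 : Finset (Set X), 𝓕.card ≤ N ∧ (∀ x : X, ∃ F ∈ 𝓕, x ∈ F) ∧
    ∀ F ∈ 𝓕, IsClosed F ∧ Disjoint (Subtype.val '' F) (closure (⋃ x ∈ F, f x))


section Helpers
variable {Z : Type*} [MetricSpace Z]




/-- A positive function on a finite set has a uniform positive lower bound. -/
lemma exists_pos_le_of_finite {α : Type*} {S : Set α} (hS : S.Finite) (g : α → ℝ)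
    (hg : ∀ y ∈ S, 0 < g y) : ∃ ε > 0, ∀ y ∈ S, ε ≤ g y := by
  classical
  set T : Finset ℝ := insert 1 (hS.toFinset.image g) with hT
  have hTne : T.Nonempty := ⟨1, Finset.mem_insert_self _ _⟩
  refine ⟨T.min' hTne, ?_, fun y hy => ?_⟩
  · rcases Finset.mem_insert.1 (T.min'_mem hTne) with h | h
    · rw [h]; exact one_pos
    · obtain ⟨y, hy, hgy⟩ := Finset.mem_image.1 h
      rw [← hgy]; exact hg y (hS.mem_toFinset.1 hy)
  · exact Finset.min'_le _ _ (Finset.mem_insert_of_mem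
      (Finset.mem_image.2 ⟨y, hS.mem_toFinset.2 hy, rfl⟩))

/-- Finitely many points inside an open set admit a uniform ball radius. -/
lemma exists_ball_subset_of_finite {S U : Set Z} (hS : S.Finite) (hU : IsOpen U)
    (hSU : S ⊆ U) : ∃ ε > 0, ∀ y ∈ S, Metric.ball y ε ⊆ U := by
  rcases eq_empty_or_nonempty Uᶜ with hUc | hUc
  · exact ⟨1, one_pos, fun y _ => by
      intro z _; by_contra hz
      exact (eq_empty_iff_forall_notMem.1 hUc z) hz⟩
  obtain ⟨ε, hε, hle⟩ := exists_pos_le_of_finite hS (fun y => Metric.infDist y Uᶜ)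
    (fun y hy => (hU.isClosed_compl.notMem_iff_infDist_pos hUc).1 (fun h => h (hSU hy)))
  refine ⟨ε, hε, fun y hy z hz => ?_⟩
  by_contra hzU
  have h1 : Metric.infDist y Uᶜ ≤ dist y z := Metric.infDist_le_dist_of_mem hzU
  have h2 := hle y hy
  have h3 := Metric.mem_ball.1 hz
  rw [dist_comm] at h3
  linarith

/-- A finite set admits a radius making balls around its points pairwise disjoint. -/
lemma exists_disjoint_balls_of_finite {S : Set Z} (hS : S.Finite) :
    ∃ ε > 0, ∀ y ∈ S, ∀ y' ∈ S, y ≠ y' →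
      Disjoint (Metric.ball y ε) (Metric.ball y' ε) := by
  have hfin : ((S ×ˢ S) ∩ {p : Z × Z | p.1 ≠ p.2}).Finite :=
    (hS.prod hS).inter_of_left _
  obtain ⟨ε, hε, hle⟩ := exists_pos_le_of_finite hfin (fun p => dist p.1 p.2)
    (fun p hp => dist_pos.2 hp.2)
  refine ⟨ε / 2, by linarith, fun y hy y' hy' hne => Metric.ball_disjoint_ball ?_⟩
  have := hle (y, y') ⟨⟨hy, hy'⟩, hne⟩
  linarith



end Helpers

section VietorisBasics

variable {X Z : Type*} [TopologicalSpace X] [TopologicalSpace Z]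

lemma VCont.isOpen_sub {f : X → Set Z} (hf : VCont f) {U : Set Z} (hU : IsOpen U) :
    IsOpen {x | f x ⊆ U} := by
  have h : @IsOpen (Set Z) (vietoris Z) {A : Set Z | A ⊆ U} :=
    TopologicalSpace.isOpen_generateFrom_of_mem (Or.inl ⟨U, hU, rfl⟩)
  exact @Continuous.isOpen_preimage X (Set Z) _ (vietoris Z) f hf _ h

lemma VCont.isOpen_hit {f : X → Set Z} (hf : VCont f) {U : Set Z} (hU : IsOpen U) :
    IsOpen {x | (f x ∩ U).Nonempty} := by
  have h : @IsOpen (Set Z) (vietoris Z) {A : Set Z | (A ∩ U).Nonempty} :=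
    TopologicalSpace.isOpen_generateFrom_of_mem (Or.inr ⟨U, hU, rfl⟩)
  exact @Continuous.isOpen_preimage X (Set Z) _ (vietoris Z) f hf _ h

lemma vcont_of_sub_hit {f : X → Set Z}
    (h1 : ∀ U : Set Z, IsOpen U → IsOpen {x | f x ⊆ U})
    (h2 : ∀ U : Set Z, IsOpen U → IsOpen {x | (f x ∩ U).Nonempty}) : VCont f := by
  rw [VCont, vietoris, continuous_generateFrom_iff]
  rintro s (⟨U, hU, rfl⟩ | ⟨U, hU, rfl⟩)
  · exact h1 U hU
  · exact h2 U hU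



end VietorisBasics

section Key
variable {X Z : Type*} [TopologicalSpace X] [MetricSpace Z]
def TopPart (φ : Z → ℝ) (S : Set Z) : Set Z := {y ∈ S | φ y = sSup (φ '' S)}


lemma structure_at (φ : Z → ℝ) (hφ : ∀ a b, dist (φ a) (φ b) ≤ dist a b)
    {f : X → Set Z} {n M : ℕ} (hM1 : 1 ≤ M) (hMn : M < n)
    (hcard : ∀ x, (f x).Finite ∧ (f x).ncard = n) (hcont : VCont f)
    (hM : ∀ x, (TopPart φ (f x)).ncard = M) (x₀ : X) :
    ∃ ε₀ > 0, ∀ ε : ℝ, 0 < ε → ε ≤ ε₀ →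
      ∃ V : Set X, IsOpen V ∧ x₀ ∈ V ∧ ∀ x ∈ V,
        (TopPart φ (f x) ⊆ ⋃ y ∈ TopPart φ (f x₀), Metric.ball y ε) ∧
        (f x \ TopPart φ (f x) ⊆ ⋃ y ∈ f x₀ \ TopPart φ (f x₀), Metric.ball y ε) ∧
        (∀ y ∈ TopPart φ (f x₀), (TopPart φ (f x) ∩ Metric.ball y ε).Nonempty) ∧
        (∀ y ∈ f x₀ \ TopPart φ (f x₀), ((f x \ TopPart φ (f x)) ∩ Metric.ball y ε).Nonempty) := by
  classical
  obtain ⟨fin₀, card₀⟩ := hcard x₀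
  set S₀ := f x₀ with hS₀def
  set s₀ := sSup (φ '' S₀) with hs₀def
  have hn0 : 0 < n := lt_of_le_of_lt (Nat.zero_le M) hMn
  have hTsub : TopPart φ S₀ ⊆ S₀ := sep_subset _ _
  have cardT : (TopPart φ S₀).ncard = M := hM x₀
  have finT : (TopPart φ S₀).Finite := fin₀.subset hTsub
  have finB : (S₀ \ TopPart φ S₀).Finite := fin₀.diff
  have cardB : (S₀ \ TopPart φ S₀).ncard = n - M := by
    rw [Set.ncard_diff hTsub finT, card₀, cardT]
  have hBne : (S₀ \ TopPart φ S₀).Nonempty :=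
    Set.nonempty_of_ncard_ne_zero (by rw [cardB]; omega)
  have hTne : (TopPart φ S₀).Nonempty :=
    Set.nonempty_of_ncard_ne_zero (by rw [cardT]; omega)
  have hle_s₀ : ∀ y ∈ S₀, φ y ≤ s₀ := fun y hy =>
    le_csSup (fin₀.image φ).bddAbove ⟨y, hy, rfl⟩
  set t₀ := sSup (φ '' (S₀ \ TopPart φ S₀)) with ht₀def
  have hbot_le : ∀ y ∈ S₀ \ TopPart φ S₀, φ y ≤ t₀ := fun y hy =>
    le_csSup (finB.image φ).bddAbove ⟨y, hy, rfl⟩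
  have ht₀lt : t₀ < s₀ := by
    obtain ⟨b, hb, hbt⟩ := Set.Nonempty.csSup_mem (hBne.image φ) (finB.image φ)
    rw [ht₀def, ← hbt]
    rcases lt_or_eq_of_le (hle_s₀ b hb.1) with h | h
    · exact h
    · exact absurd ⟨hb.1, h⟩ hb.2
  obtain ⟨εs, hεs, hdisj⟩ := exists_disjoint_balls_of_finite fin₀
  refine ⟨min εs ((s₀ - t₀)/3), lt_min hεs (by linarith), fun ε hε hεle => ?_⟩
  have hεs' : ε ≤ εs := le_trans hεle (min_le_left _ _)
  have hεδ : 3 * ε ≤ s₀ - t₀ := by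
    have := le_trans hεle (min_le_right _ _); linarith
  have hdisjε : ∀ y ∈ S₀, ∀ y' ∈ S₀, y ≠ y' →
      Disjoint (Metric.ball y ε) (Metric.ball y' ε) := fun y hy y' hy' hne =>
    (hdisj y hy y' hy' hne).mono (Metric.ball_subset_ball hεs')
      (Metric.ball_subset_ball hεs')
  set W := ⋃ y ∈ S₀, Metric.ball y ε with hWdef
  have hWopen : IsOpen W := isOpen_biUnion (fun y _ => Metric.isOpen_ball)
  set V := {x | f x ⊆ W} ∩ ⋂ y ∈ S₀, {x | (f x ∩ Metric.ball y ε).Nonempty} with hVdef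
  have hVopen : IsOpen V := (hcont.isOpen_sub hWopen).inter
    (fin₀.isOpen_biInter (fun y _ => hcont.isOpen_hit Metric.isOpen_ball))
  have hx₀V : x₀ ∈ V :=
    ⟨fun a ha => mem_biUnion ha (Metric.mem_ball_self hε),
     mem_iInter₂.2 (fun y hy => ⟨y, hy, Metric.mem_ball_self hε⟩)⟩
  refine ⟨V, hVopen, hx₀V, fun x hxV => ?_⟩
  obtain ⟨hx1, hx2'⟩ := hxV
  have hx2 : ∀ y ∈ S₀, (f x ∩ Metric.ball y ε).Nonempty := fun y hy =>
    mem_iInter₂.1 hx2' y hy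
  obtain ⟨finx, cardx⟩ := hcard x
  have hchoice : ∀ y : Z, ∃ a : Z, y ∈ S₀ → a ∈ f x ∩ Metric.ball y ε := by
    intro y
    by_cases hy : y ∈ S₀
    · obtain ⟨a, ha⟩ := hx2 y hy; exact ⟨a, fun _ => ha⟩
    · exact ⟨y, fun h => absurd h hy⟩
  choose c hcmem using hchoice
  have hcinj : Set.InjOn c S₀ := by
    intro y hy y' hy' heq
    by_contra hne
    exact Set.disjoint_left.1 (hdisjε y hy y' hy' hne) (hcmem y hy).2
      (heq ▸ (hcmem y' hy').2)
  have himg : c '' S₀ = f x := by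
    apply Set.eq_of_subset_of_ncard_le
    · rintro _ ⟨y, hy, rfl⟩; exact (hcmem y hy).1
    · rw [Set.ncard_image_of_injOn hcinj, card₀, cardx]
    · exact finx
  have hlabel : ∀ a ∈ f x, ∃ y ∈ S₀, a = c y := by
    rw [← himg]; rintro a ⟨y, hy, rfl⟩; exact ⟨y, hy, rfl⟩
  have huniq : ∀ a : Z, ∀ y ∈ S₀, ∀ y' ∈ S₀, a ∈ Metric.ball y ε →
      a ∈ Metric.ball y' ε → y = y' := by
    intro a y hy y' hy' h1 h2
    by_contra hne
    exact Set.disjoint_left.1 (hdisjε y hy y' hy' hne) h1 h2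
  have hsupx_lb : s₀ - ε < sSup (φ '' f x) := by
    obtain ⟨y, hy⟩ := hTne
    have hcy := hcmem y (hTsub hy)
    have h1 : |φ (c y) - φ y| ≤ dist (c y) y := by
      rw [← Real.dist_eq]; exact hφ _ _
    have h2 : dist (c y) y < ε := Metric.mem_ball.1 hcy.2
    have h3 : φ y = s₀ := hy.2
    have h4 : φ (c y) ≤ sSup (φ '' f x) :=
      le_csSup (finx.image φ).bddAbove ⟨_, hcy.1, rfl⟩
    have h5 := abs_lt.1 (lt_of_le_of_lt h1 h2)
    linarith [h5.1]
  have hbot_est : ∀ a : Z, ∀ y ∈ S₀ \ TopPart φ S₀, a ∈ Metric.ball y ε →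
      φ a < sSup (φ '' f x) := by
    intro a y hy ha
    have h1 : |φ a - φ y| ≤ dist a y := by rw [← Real.dist_eq]; exact hφ _ _
    have h2 : dist a y < ε := Metric.mem_ball.1 ha
    have h3 : φ y ≤ t₀ := hbot_le y hy
    have h5 := abs_lt.1 (lt_of_le_of_lt h1 h2)
    linarith [h5.2]
  have hTx_sub : TopPart φ (f x) ⊆ f x ∩ ⋃ y ∈ TopPart φ S₀, Metric.ball y ε := by
    rintro a ⟨haf, hamax⟩
    obtain ⟨y, hy, hball⟩ := mem_iUnion₂.1 (hx1 haf)
    refine ⟨haf, mem_biUnion ?_ hball⟩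
    by_contra hyT
    exact absurd hamax (ne_of_lt (hbot_est a y ⟨hy, hyT⟩ hball))
  have hPc : f x ∩ (⋃ y ∈ TopPart φ S₀, Metric.ball y ε) = c '' TopPart φ S₀ := by
    apply Set.Subset.antisymm
    · rintro a ⟨haf, hmem⟩
      obtain ⟨y, hy, hball⟩ := mem_iUnion₂.1 hmem
      obtain ⟨y', hy', rfl⟩ := hlabel a haf
      have : y' = y := huniq (c y') y' hy' y (hTsub hy) (hcmem y' hy').2 hball
      exact ⟨y, this ▸ hy, by rw [this]⟩
    · rintro _ ⟨y, hy, rfl⟩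
      exact ⟨(hcmem y (hTsub hy)).1, mem_biUnion hy (hcmem y (hTsub hy)).2⟩
  have hTx_eq : TopPart φ (f x) = f x ∩ ⋃ y ∈ TopPart φ S₀, Metric.ball y ε :=
    Set.eq_of_subset_of_ncard_le hTx_sub
      (by rw [hPc, Set.ncard_image_of_injOn (hcinj.mono hTsub), cardT, hM x])
      (finx.inter_of_left _)
  refine ⟨?_, ?_, ?_, ?_⟩
  · exact hTx_eq ▸ inter_subset_right
  · intro a ha
    obtain ⟨y, hy, hball⟩ := mem_iUnion₂.1 (hx1 ha.1)
    have hyB : y ∈ S₀ \ TopPart φ S₀ := by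
      refine ⟨hy, fun hyT => ?_⟩
      exact ha.2 (hTx_eq ▸ (⟨ha.1, mem_biUnion hyT hball⟩ :
        a ∈ f x ∩ ⋃ y ∈ TopPart φ S₀, Metric.ball y ε))
    exact mem_biUnion hyB hball
  · intro y hy
    refine ⟨c y, ?_, (hcmem y (hTsub hy)).2⟩
    rw [hTx_eq, hPc]
    exact ⟨y, hy, rfl⟩
  · intro y hy
    refine ⟨c y, ⟨(hcmem y hy.1).1, fun hcT => ?_⟩, (hcmem y hy.1).2⟩
    have : φ (c y) = sSup (φ '' f x) := hcT.2
    exact absurd this (ne_of_lt (hbot_est (c y) y hy (hcmem y hy.1).2))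

lemma vcont_parts (φ : Z → ℝ) (hφ : ∀ a b, dist (φ a) (φ b) ≤ dist a b)
    {f : X → Set Z} {n M : ℕ} (hM1 : 1 ≤ M) (hMn : M < n)
    (hcard : ∀ x, (f x).Finite ∧ (f x).ncard = n) (hcont : VCont f)
    (hM : ∀ x, (TopPart φ (f x)).ncard = M) :
    VCont (fun x => TopPart φ (f x)) ∧ VCont (fun x => f x \ TopPart φ (f x)) := by
  constructor
  · apply vcont_of_sub_hit
    · intro U hU
      rw [isOpen_iff_forall_mem_open]
      intro x₀ hx₀
      obtain ⟨ε₀, hε₀, hstr⟩ := structure_at φ hφ hM1 hMn hcard hcont hM x₀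
      have hfinT : (TopPart φ (f x₀)).Finite := (hcard x₀).1.subset (sep_subset _ _)
      obtain ⟨ε₁, hε₁, hballs⟩ := exists_ball_subset_of_finite hfinT hU hx₀
      obtain ⟨V, hVo, hx₀V, hV⟩ := hstr (min ε₀ ε₁) (lt_min hε₀ hε₁) (min_le_left _ _)
      refine ⟨V, fun x hx => ?_, hVo, hx₀V⟩
      intro a ha
      obtain ⟨y, hy, hball⟩ := mem_iUnion₂.1 ((hV x hx).1 ha)
      exact hballs y hy (Metric.ball_subset_ball (min_le_right _ _) hball)
    · intro U hU
      rw [isOpen_iff_forall_mem_open]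
      rintro x₀ ⟨a, haT, haU⟩
      obtain ⟨ε₀, hε₀, hstr⟩ := structure_at φ hφ hM1 hMn hcard hcont hM x₀
      obtain ⟨ε₁, hε₁, hball⟩ := Metric.isOpen_iff.1 hU a haU
      obtain ⟨V, hVo, hx₀V, hV⟩ := hstr (min ε₀ ε₁) (lt_min hε₀ hε₁) (min_le_left _ _)
      refine ⟨V, fun x hx => ?_, hVo, hx₀V⟩
      obtain ⟨b, hbT, hbb⟩ := (hV x hx).2.2.1 a haT
      exact ⟨b, hbT, hball (Metric.ball_subset_ball (min_le_right _ _) hbb)⟩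
  · apply vcont_of_sub_hit
    · intro U hU
      rw [isOpen_iff_forall_mem_open]
      intro x₀ hx₀
      obtain ⟨ε₀, hε₀, hstr⟩ := structure_at φ hφ hM1 hMn hcard hcont hM x₀
      have hfinB : (f x₀ \ TopPart φ (f x₀)).Finite := (hcard x₀).1.diff
      obtain ⟨ε₁, hε₁, hballs⟩ := exists_ball_subset_of_finite hfinB hU hx₀
      obtain ⟨V, hVo, hx₀V, hV⟩ := hstr (min ε₀ ε₁) (lt_min hε₀ hε₁) (min_le_left _ _)
      refine ⟨V, fun x hx => ?_, hVo, hx₀V⟩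
      intro a ha
      obtain ⟨y, hy, hball⟩ := mem_iUnion₂.1 ((hV x hx).2.1 ha)
      exact hballs y hy (Metric.ball_subset_ball (min_le_right _ _) hball)
    · intro U hU
      rw [isOpen_iff_forall_mem_open]
      rintro x₀ ⟨a, haB, haU⟩
      obtain ⟨ε₀, hε₀, hstr⟩ := structure_at φ hφ hM1 hMn hcard hcont hM x₀
      obtain ⟨ε₁, hε₁, hball⟩ := Metric.isOpen_iff.1 hU a haU
      obtain ⟨V, hVo, hx₀V, hV⟩ := hstr (min ε₀ ε₁) (lt_min hε₀ hε₁) (min_le_left _ _)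
      refine ⟨V, fun x hx => ?_, hVo, hx₀V⟩
      obtain ⟨b, hbB, hbb⟩ := (hV x hx).2.2.2 a haB
      exact ⟨b, hbB, hball (Metric.ball_subset_ball (min_le_right _ _) hbb)⟩

end Key

lemma coord_lip {m : ℕ} (i : Fin m) (a b : EuclideanSpace ℝ (Fin m)) :
    dist (a i) (b i) ≤ dist a b := by
  rw [EuclideanSpace.dist_eq]
  rw [show dist (a i) (b i) = Real.sqrt (dist (a i) (b i) ^ 2) from
    (Real.sqrt_sq dist_nonneg).symm]
  apply Real.sqrt_le_sqrt
  exact Finset.single_le_sum (f := fun j => dist (a j) (b j) ^ 2)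
    (fun j _ => sq_nonneg _) (Finset.mem_univ i)

theorem stmt6 {m n M K : ℕ} (hm : 0 < m) (hM1 : 1 ≤ M) (hMn : M < n)
    (A : Set (EuclideanSpace ℝ (Fin m))) (hA : IsClosed A)
    (f : A → Set (EuclideanSpace ℝ (Fin m)))
    (hcard : ∀ x, (f x).Finite ∧ (f x).ncard = n)
    (hcont : VCont f)
    (hfree : ∀ x : A, (x : EuclideanSpace ℝ (Fin m)) ∉ f x)
    (hM : ∀ x, {y ∈ f x | y ⟨0, hm⟩ = sSup ((fun z => z ⟨0, hm⟩) '' f x)}.ncard = M)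
    (hK : ∀ (B : Set (EuclideanSpace ℝ (Fin m))), IsClosed B →
      ∀ g : B → Set (EuclideanSpace ℝ (Fin m)),
        (∀ x, (g x).Nonempty ∧ (g x).Finite ∧ (g x).ncard ≤ n - 1) →
        VCont g → (∀ x : B, (x : EuclideanSpace ℝ (Fin m)) ∉ g x) →
        BrightColorable g K) :
    BrightColorable f (K ^ 2) := by
  classical
  set φ : EuclideanSpace ℝ (Fin m) → ℝ := fun z => z ⟨0, hm⟩ with hφdef
  have hφ : ∀ a b : EuclideanSpace ℝ (Fin m), dist (φ a) (φ b) ≤ dist a b :=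
    fun a b => coord_lip _ a b
  have hMtop : ∀ x, (TopPart φ (f x)).ncard = M := hM
  obtain ⟨hcontT, hcontB⟩ := vcont_parts φ hφ hM1 hMn hcard hcont hMtop
  have hTsub : ∀ x, TopPart φ (f x) ⊆ f x := fun x => sep_subset _ _
  have finT : ∀ x, (TopPart φ (f x)).Finite := fun x => (hcard x).1.subset (hTsub x)
  have hT : BrightColorable (fun x => TopPart φ (f x)) K := by
    refine hK A hA _ (fun x => ⟨?_, finT x, ?_⟩) hcontT (fun x hx => hfree x (hTsub x hx))
    · exact Set.nonempty_of_ncard_ne_zero (by rw [hMtop x]; omega)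
    · rw [hMtop x]; omega
  have cardB : ∀ x, (f x \ TopPart φ (f x)).ncard = n - M := fun x => by
    rw [Set.ncard_diff (hTsub x) (finT x), (hcard x).2, hMtop x]
  have hB : BrightColorable (fun x => f x \ TopPart φ (f x)) K := by
    refine hK A hA _ (fun x => ⟨?_, (hcard x).1.diff, ?_⟩) hcontB
      (fun x hx => hfree x hx.1)
    · exact Set.nonempty_of_ncard_ne_zero (by rw [cardB x]; omega)
    · rw [cardB x]; omega
  obtain ⟨FT, hFTcard, hFTcov, hFTcol⟩ := hT
  obtain ⟨FB, hFBcard, hFBcov, hFBcol⟩ := hB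
  refine ⟨(FT ×ˢ FB).image (fun p => p.1 ∩ p.2), ?_, ?_, ?_⟩
  · calc ((FT ×ˢ FB).image (fun p => p.1 ∩ p.2)).card ≤ (FT ×ˢ FB).card :=
        Finset.card_image_le
      _ = FT.card * FB.card := Finset.card_product _ _
      _ ≤ K * K := Nat.mul_le_mul hFTcard hFBcard
      _ = K ^ 2 := (sq K).symm
  · intro x
    obtain ⟨F, hF, hxF⟩ := hFTcov x
    obtain ⟨G, hG, hxG⟩ := hFBcov x
    exact ⟨F ∩ G, Finset.mem_image.2 ⟨(F, G), Finset.mem_product.2 ⟨hF, hG⟩, rfl⟩,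
      hxF, hxG⟩
  · intro S hS
    obtain ⟨⟨F, G⟩, hFG, rfl⟩ := Finset.mem_image.1 hS
    obtain ⟨hF, hG⟩ := Finset.mem_product.1 hFG
    obtain ⟨hFc, hFd⟩ := hFTcol F hF
    obtain ⟨hGc, hGd⟩ := hFBcol G hG
    refine ⟨hFc.inter hGc, ?_⟩
    have hsub : (⋃ x ∈ F ∩ G, f x) ⊆
        (⋃ x ∈ F, TopPart φ (f x)) ∪ (⋃ x ∈ G, f x \ TopPart φ (f x)) := by
      intro z hz
      obtain ⟨x, hx, hzf⟩ := mem_iUnion₂.1 hz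
      by_cases hzT : z ∈ TopPart φ (f x)
      · exact Or.inl (mem_biUnion hx.1 hzT)
      · exact Or.inr (mem_biUnion hx.2 ⟨hzf, hzT⟩)
    have hcl : closure (⋃ x ∈ F ∩ G, f x) ⊆
        closure (⋃ x ∈ F, TopPart φ (f x)) ∪ closure (⋃ x ∈ G, f x \ TopPart φ (f x)) := by
      rw [← closure_union]
      exact closure_mono hsub
    refine Disjoint.mono_right hcl (disjoint_union_right.2 ⟨?_, ?_⟩)
    · exact hFd.mono_left (image_mono inter_subset_left)
    · exact hGd.mono_left (image_mono inter_subset_right)
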